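/- Let m, n be nonempty finite types, let R be a complex matrix indexed by m × n (i.e., R : Matrix (m × n) (m × n) ℂ), and let δ ≥ 0. Suppose that for every matrix B : Matrix n n ℂ one has ‖R · (1 ⊗ₖ B) − (1 ⊗ₖ B) · R‖ ≤ δ · ‖B‖, where 1 ⊗ₖ B is the Kronecker product of the identity on m with B. Then there exists a matrix S : Matrix m m ℂ with ‖R − S ⊗ₖ 1‖ ≤ δ. (Operators that almost commute with everything supported on the second factor are norm-close to an operator supported on the first factor; this is the normalized-partial-trace localization lemma.) -/

import Mathlib

open scoped Matrix.Norms.L2Operator Kronecker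
open Matrix Finset

noncomputable section
namespace ACL

def ε (b : Bool) : ℂ := if b then 1 else -1

lemma ε_mul_self (b : Bool) : ε b * ε b = 1 := by cases b <;> simp [ε]

lemma star_ε (b : Bool) : star (ε b) = ε b := by cases b <;> simp [ε]

lemma sign_sum {n : Type*} [Fintype n] [DecidableEq n] (c d : n) :
    ∑ s : n → Bool, ε (s c) * ε (s d) =
      if c = d then (2 ^ Fintype.card n : ℂ) else 0 := by
  rcases eq_or_ne c d with rfl | hcd
  · rw [if_pos rfl, Finset.sum_congr rfl (fun s _ => ε_mul_self (s c))]
    simp [Finset.card_univ]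
  · rw [if_neg hcd]
    apply Finset.sum_ninvolution (g := fun s => Function.update s c (!(s c)))
    · intro s
      rw [Function.update_apply, Function.update_apply, if_pos rfl, if_neg (Ne.symm hcd)]
      cases s c <;> cases s d <;> simp [ε]
    · intro s _ hs
      have := congrFun hs c
      simp [Function.update_apply] at this
    · intro s; exact Finset.mem_univ _
    · intro s
      funext y
      rcases eq_or_ne y c with rfl | hy
      · simp [Function.update_apply]
      · simp [Function.update_apply, hy]

lemma norm_of_unitary {p : Type*} [Fintype p] [Nonempty p] [DecidableEq p]
    (U : Matrix p p ℂ) (h : Uᴴ * U = 1) : ‖U‖ = 1 := by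
  have h2 := Matrix.l2_opNorm_conjTranspose_mul_self U
  rw [h, CStarRing.norm_one] at h2
  rcases mul_self_eq_one_iff.mp h2.symm with h | h
  · exact h
  · nlinarith [norm_nonneg U]

lemma conj_entry {m n : Type*} [Fintype m] [Fintype n] [DecidableEq m]
    (R : Matrix (m × n) (m × n) ℂ) (B : Matrix n n ℂ) (i : m) (a : n) (j : m) (b : n) :
    (((1 : Matrix m m ℂ) ⊗ₖ B)ᴴ * R * ((1 : Matrix m m ℂ) ⊗ₖ B)) (i,a) (j,b)
      = ∑ c, ∑ d, star (B c a) * R (i,c) (j,d) * B d b := by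
  simp only [Matrix.mul_apply, Matrix.conjTranspose_apply, Matrix.kroneckerMap_apply,
    Fintype.sum_prod_type, Matrix.one_apply, star_mul', star_one, star_zero, apply_ite]
  simp only [ite_mul, mul_ite, one_mul, mul_one, zero_mul, mul_zero, star_zero, star_one,
    Finset.sum_ite_eq, Finset.sum_ite_eq', Finset.mem_univ, if_true]
  rw [Finset.sum_comm]
  simp only [Finset.sum_ite_eq', Finset.mem_univ, if_true, Finset.sum_mul]
  simp only [ite_mul, zero_mul, Finset.sum_ite_irrel, Finset.sum_const_zero,
    Finset.sum_ite_eq', Finset.mem_univ, if_true]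
  rw [Finset.sum_comm]

lemma one_kron_conjTranspose {m n : Type*} [Fintype m] [Fintype n] [DecidableEq m]
    (B : Matrix n n ℂ) :
    ((1 : Matrix m m ℂ) ⊗ₖ B)ᴴ = (1 : Matrix m m ℂ) ⊗ₖ Bᴴ := by
  ext ⟨i,a⟩ ⟨j,b⟩
  simp only [Matrix.conjTranspose_apply, Matrix.kroneckerMap_apply, Matrix.one_apply,
    star_mul', apply_ite, star_one, star_zero]
  by_cases hij : i = j
  · subst hij; simp
  · simp [hij, Ne.symm hij]

end ACL
end

/-- Normalized-partial-trace localization: a matrix on a tensor product that almost commutes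
(up to `δ‖B‖`) with every operator `1 ⊗ₖ B` supported on the second factor is within `δ` of an
operator `S ⊗ₖ 1` supported on the first factor. -/
theorem almost_commuting_localization
    {m n : Type*} [Fintype m] [Fintype n] [Nonempty m] [Nonempty n]
    [DecidableEq m] [DecidableEq n]
    (R : Matrix (m × n) (m × n) ℂ) (δ : ℝ) (hδ : 0 ≤ δ)
    (h : ∀ B : Matrix n n ℂ,
      ‖R * ((1 : Matrix m m ℂ) ⊗ₖ B) - ((1 : Matrix m m ℂ) ⊗ₖ B) * R‖ ≤ δ * ‖B‖) :
    ∃ S : Matrix m m ℂ, ‖R - S ⊗ₖ (1 : Matrix n n ℂ)‖ ≤ δ := by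
  classical
  set k := Fintype.card n with hk
  haveI : NeZero k := ⟨Fintype.card_ne_zero⟩
  obtain ⟨e⟩ : Nonempty (n ≃ ZMod k) := ⟨Fintype.equivOfCardEq (by simp [ZMod.card, hk])⟩
  set τ : ZMod k → n → n := fun x a => e.symm (e a + x) with hτ
  have hτinj : ∀ x, Function.Injective (τ x) := by
    intro x a b hab
    apply e.injective
    exact add_right_cancel (e.symm.injective hab)
  have hτsum : ∀ (a : n) (f : n → ℂ), ∑ x : ZMod k, f (τ x a) = ∑ c, f c := by
    intro a f
    exact Equiv.sum_comp ((Equiv.addLeft (e a)).trans e.symm) f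
  set B : ((n → Bool) × ZMod k) → Matrix n n ℂ :=
    fun g => Matrix.of fun c a => if c = τ g.2 a then ACL.ε (g.1 c) else 0 with hB
  -- unitarity of B
  have hBu : ∀ g, (B g)ᴴ * B g = 1 := by
    intro g
    ext a b
    rw [Matrix.mul_apply]
    rw [Finset.sum_eq_single (τ g.2 a)]
    · rcases eq_or_ne a b with rfl | hab
      · simp [hB, ACL.star_ε, ACL.ε_mul_self]
      · have hne : τ g.2 a ≠ τ g.2 b := fun hc => hab ((hτinj g.2) hc)
        simp [hB, hne, Matrix.one_apply_ne hab]
    · intro c _ hc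
      simp only [Matrix.conjTranspose_apply, hB, Matrix.of_apply, if_neg hc, star_zero, zero_mul]
    · intro hc; exact absurd (Finset.mem_univ _) hc
  set W : ((n → Bool) × ZMod k) → Matrix (m × n) (m × n) ℂ :=
    fun g => (1 : Matrix m m ℂ) ⊗ₖ B g with hW
  have hWu : ∀ g, (W g)ᴴ * W g = 1 := by
    intro g
    rw [hW, ACL.one_kron_conjTranspose, ← Matrix.mul_kronecker_mul, one_mul, hBu,
      Matrix.one_kronecker_one]
  have hnormW : ∀ g, ‖W g‖ = 1 := fun g => ACL.norm_of_unitary _ (hWu g)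
  have hnormB : ∀ g, ‖B g‖ = 1 := fun g => ACL.norm_of_unitary _ (hBu g)
  -- each conjugate is δ-close
  have hD : ∀ g, ‖R - (W g)ᴴ * R * W g‖ ≤ δ := by
    intro g
    have e1 : R - (W g)ᴴ * R * W g = (W g)ᴴ * (W g * R - R * W g) := by
      rw [mul_sub, ← mul_assoc, hWu g, one_mul, mul_assoc]
    rw [e1]
    calc ‖(W g)ᴴ * (W g * R - R * W g)‖
        ≤ ‖(W g)ᴴ‖ * ‖W g * R - R * W g‖ := norm_mul_le _ _
      _ = ‖R * W g - W g * R‖ := by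
          rw [Matrix.l2_opNorm_conjTranspose, hnormW g, one_mul, norm_sub_rev]
      _ ≤ δ * ‖B g‖ := h (B g)
      _ = δ := by rw [hnormB g, mul_one]
  -- key averaging identity, entrywise
  have hkey : ∀ (i : m) (a : n) (j : m) (b : n),
      ∑ g : (n → Bool) × ZMod k, ((W g)ᴴ * R * W g) (i,a) (j,b)
        = (2^k : ℂ) * (if a = b then ∑ c, R (i,c) (j,c) else 0) := by
    intro i a j b
    have h1 : ∀ g : (n → Bool) × ZMod k, ((W g)ᴴ * R * W g) (i,a) (j,b)
        = (ACL.ε (g.1 (τ g.2 a)) * ACL.ε (g.1 (τ g.2 b))) * R (i, τ g.2 a) (j, τ g.2 b) := by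
      intro g
      rw [hW, ACL.conj_entry]
      rw [Finset.sum_eq_single (τ g.2 a)]
      · rw [Finset.sum_eq_single (τ g.2 b)]
        · simp only [hB, Matrix.of_apply, eq_self_iff_true, if_true, ACL.star_ε]
          ring
        · intro d _ hd
          simp only [hB, Matrix.of_apply, if_neg hd, mul_zero]
        · intro hc; exact absurd (Finset.mem_univ _) hc
      · intro c _ hc
        apply Finset.sum_eq_zero
        intro d _
        simp only [hB, Matrix.of_apply, if_neg hc, star_zero, zero_mul]
      · intro hc; exact absurd (Finset.mem_univ _) hc
    rw [Finset.sum_congr rfl (fun g _ => h1 g)]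
    rw [Fintype.sum_prod_type_right]
    have h2 : ∀ x : ZMod k,
        ∑ s : n → Bool, (ACL.ε (s (τ x a)) * ACL.ε (s (τ x b))) * R (i, τ x a) (j, τ x b)
          = (if a = b then (2^k : ℂ) else 0) * R (i, τ x a) (j, τ x b) := by
      intro x
      rw [← Finset.sum_mul, ACL.sign_sum]
      congr 1
      rcases eq_or_ne a b with rfl | hab
      · rw [if_pos rfl, if_pos rfl]
      · rw [if_neg hab, if_neg (fun hc => hab ((hτinj x) hc))]
    rw [Finset.sum_congr rfl (fun x _ => h2 x)]
    rcases eq_or_ne a b with rfl | hab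
    · simp only [eq_self_iff_true, if_true]
      rw [← Finset.mul_sum, hτsum a (fun c => R (i,c) (j,c))]
    · simp [hab]
  -- the candidate S
  refine ⟨(k : ℂ)⁻¹ • Matrix.of (fun i j => ∑ c, R (i,c) (j,c)), ?_⟩
  set S : Matrix m m ℂ := (k : ℂ)⁻¹ • Matrix.of (fun i j => ∑ c, R (i,c) (j,c)) with hS
  set N : ℕ := 2^k * k with hN
  have hkpos : 0 < k := Fintype.card_pos
  have hNpos : 0 < N := by positivity
  have hcard : Fintype.card ((n → Bool) × ZMod k) = N := by
    simp [ZMod.card, hN, Fintype.card_fun, hk]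
  have hsplit : R - S ⊗ₖ (1 : Matrix n n ℂ)
      = ((N : ℂ))⁻¹ • ∑ g : (n → Bool) × ZMod k, (R - (W g)ᴴ * R * W g) := by
    ext ⟨i,a⟩ ⟨j,b⟩
    simp only [Matrix.sub_apply, Matrix.smul_apply, Matrix.sum_apply, smul_eq_mul]
    rw [Finset.sum_sub_distrib, hkey i a j b, Finset.sum_const, Finset.card_univ, hcard,
      nsmul_eq_mul]
    simp only [hS, Matrix.kroneckerMap_apply, Matrix.smul_apply, Matrix.of_apply,
      smul_eq_mul, Matrix.one_apply]
    have hk0 : (k : ℂ) ≠ 0 := Nat.cast_ne_zero.mpr hkpos.ne'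
    have hN0 : (N : ℂ) ≠ 0 := Nat.cast_ne_zero.mpr hNpos.ne'
    have h2k : ((N : ℕ) : ℂ) = 2^k * k := by
      rw [hN]; push_cast; ring
    rcases eq_or_ne a b with rfl | hab
    · rw [if_pos rfl, if_pos rfl]
      field_simp [h2k]
      rw [h2k]
      ring
    · rw [if_neg hab, if_neg hab]
      field_simp [h2k]
      ring
  rw [hsplit, norm_smul]
  have : ‖((N:ℂ))⁻¹‖ = (N:ℝ)⁻¹ := by
    rw [norm_inv, Complex.norm_natCast]
  rw [this]
  calc (N:ℝ)⁻¹ * ‖∑ g : (n → Bool) × ZMod k, (R - (W g)ᴴ * R * W g)‖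
      ≤ (N:ℝ)⁻¹ * ∑ g : (n → Bool) × ZMod k, ‖R - (W g)ᴴ * R * W g‖ := by
        apply mul_le_mul_of_nonneg_left (norm_sum_le _ _)
        positivity
    _ ≤ (N:ℝ)⁻¹ * ∑ _g : (n → Bool) × ZMod k, δ := by
        apply mul_le_mul_of_nonneg_left (Finset.sum_le_sum (fun g _ => hD g))
        positivity
    _ = δ := by
        rw [Finset.sum_const, Finset.card_univ, hcard, nsmul_eq_mul]
        field_simp
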